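/- For ε ∈ (0,1) fixed, (p · log(1 + (1/p)(1/ε − 1)))^{1/α} → 0 as p → 0⁺ (for α > 1), and consequently the ratio η_asym/η_sym = (−log ε)^{1/α} / (p·log(1 + (1/p)(1/ε − 1)))^{1/α} → +∞ as p → 0⁺. -/

import Mathlib

open Real Filter Topology Asymptotics

theorem lac_eta_ratio_tendsto (ε α : ℝ) (hε : ε ∈ Set.Ioo (0:ℝ) 1) (hα : 1 < α) :
    Tendsto (fun p : ℝ => (p * Real.log (1 + (1 / p) * (1 / ε - 1))) ^ (1 / α))
      (nhdsWithin 0 (Set.Ioi 0)) (nhds 0) ∧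
    Tendsto (fun p : ℝ =>
        (-Real.log ε) ^ (1 / α) / (p * Real.log (1 + (1 / p) * (1 / ε - 1))) ^ (1 / α))
      (nhdsWithin 0 (Set.Ioi 0)) atTop := by
  obtain ⟨hε0, hε1⟩ := hε
  set c : ℝ := 1 / ε - 1 with hc
  have h1ε : 1 < 1 / ε := by rw [lt_div_iff₀ hε0]; linarith
  have hcpos : 0 < c := by rw [hc]; linarith
  -- core limit at infinity
  have h1 : Tendsto (fun t : ℝ => t⁻¹ * Real.log (1 + t * c)) atTop (nhds 0) := by
    have htop : Tendsto (fun t : ℝ => 1 + t * c) atTop atTop := by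
      apply tendsto_atTop_add_const_left
      exact Tendsto.atTop_mul_const hcpos tendsto_id
    have ho : (fun t : ℝ => Real.log (1 + t * c)) =o[atTop] (fun t : ℝ => t) := by
      refine (Real.isLittleO_log_id_atTop.comp_tendsto htop).trans_isBigO ?_
      refine Asymptotics.IsBigO.of_bound (1 + c) ?_
      filter_upwards [eventually_ge_atTop (1 : ℝ)] with t ht
      have h0 : (0:ℝ) ≤ t := le_trans zero_le_one ht
      have : 1 + t * c ≤ (1 + c) * t := by nlinarith
      simp only [Function.comp_apply, id_eq, Real.norm_eq_abs]
      rw [abs_of_nonneg (by nlinarith : (0:ℝ) ≤ 1 + t * c), abs_of_nonneg h0]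
      exact this
    have := ho.tendsto_div_nhds_zero
    simpa [div_eq_inv_mul, mul_comm] using this
  have hinv : Tendsto (fun p : ℝ => p⁻¹) (nhdsWithin 0 (Set.Ioi 0)) atTop :=
    tendsto_inv_nhdsGT_zero
  have h2 : Tendsto (fun p : ℝ => p * Real.log (1 + (1 / p) * c))
      (nhdsWithin 0 (Set.Ioi 0)) (nhds 0) := by
    have := h1.comp hinv
    refine this.congr' ?_
    filter_upwards [self_mem_nhdsWithin] with p (hp : 0 < p)
    simp [Function.comp, inv_inv, one_div]
  have hcontr : ContinuousAt (fun x : ℝ => x ^ (1 / α)) 0 :=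
    Real.continuousAt_rpow_const 0 (1 / α) (Or.inr (by positivity))
  have hαne : (α : ℝ)⁻¹ ≠ 0 := by positivity
  have part1 : Tendsto (fun p : ℝ => (p * Real.log (1 + (1 / p) * c)) ^ (1 / α))
      (nhdsWithin 0 (Set.Ioi 0)) (nhds 0) := by
    have := hcontr.tendsto.comp h2
    simpa [Function.comp_def, one_div, Real.zero_rpow hαne] using this
  refine ⟨part1, ?_⟩
  have hlogε : Real.log ε < 0 := Real.log_neg hε0 hε1
  have hCpos : 0 < (-Real.log ε) ^ (1 / α) :=
    Real.rpow_pos_of_pos (by linarith) _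
  have hgpos : ∀ p ∈ Set.Ioi (0:ℝ),
      0 < (p * Real.log (1 + (1 / p) * c)) ^ (1 / α) := by
    intro p hp
    have hp' : 0 < p := hp
    have : 0 < Real.log (1 + (1 / p) * c) := by
      apply Real.log_pos
      have : 0 < (1 / p) * c := by positivity
      linarith
    exact Real.rpow_pos_of_pos (by positivity) _
  have hg : Tendsto (fun p : ℝ => (p * Real.log (1 + (1 / p) * c)) ^ (1 / α))
      (nhdsWithin 0 (Set.Ioi 0)) (nhdsWithin 0 (Set.Ioi 0)) := by
    rw [tendsto_nhdsWithin_iff]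
    refine ⟨part1, ?_⟩
    filter_upwards [self_mem_nhdsWithin] with p hp
    exact hgpos p hp
  have hinvg : Tendsto (fun p : ℝ => ((p * Real.log (1 + (1 / p) * c)) ^ (1 / α))⁻¹)
      (nhdsWithin 0 (Set.Ioi 0)) atTop := tendsto_inv_nhdsGT_zero.comp hg
  have := hinvg.const_mul_atTop hCpos
  simpa [div_eq_mul_inv] using this
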